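/- Let f(θ) = a₀ + a₁ e^{ιθ} + a₁ᵀ e^{−ιθ} with a₀ = (1/3)[[16, −8],[−8, 14]] and a₁ = (1/3)[[0, −8],[0, 1]] (the Q₂ Lagrangian FEM symbol). Then the eigenvalues of the Hermitian matrix f(θ) are λ_{1,2}(θ) = 5 + (1/3)cos θ ∓ (1/3)√(129 + 126 cos θ + cos²θ); in particular λ_min(f(θ)) vanishes (only) at θ = 0 with a zero of order two, and ‖f‖_∞ = max_θ ‖f(θ)‖_∞(row-sum) = 32/3. -/

import Mathlib

open Matrix

/-- Zeroth Fourier coefficient of the `ℚ₂` Lagrangian FEM symbol. -/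
noncomputable def a0 : Matrix (Fin 2) (Fin 2) ℂ := (1 / 3 : ℂ) • !![16, -8; -8, 14]

/-- First Fourier coefficient of the `ℚ₂` Lagrangian FEM symbol. -/
noncomputable def a1 : Matrix (Fin 2) (Fin 2) ℂ := (1 / 3 : ℂ) • !![0, -8; 0, 1]

/-- The `ℚ₂` Lagrangian FEM symbol `f(θ) = a₀ + a₁ e^{ιθ} + a₁ᵀ e^{−ιθ}`. -/
noncomputable def fQ2 (θ : ℝ) : Matrix (Fin 2) (Fin 2) ℂ :=
  a0 + Complex.exp (Complex.I * (θ : ℂ)) • a1 +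
    Complex.exp (-Complex.I * (θ : ℂ)) • a1ᵀ

/-- Minimal eigenvalue function of `fQ2`. -/
noncomputable def lminQ2 (θ : ℝ) : ℝ :=
  5 + Real.cos θ / 3 -
    Real.sqrt (129 + 126 * Real.cos θ + Real.cos θ ^ 2) / 3

/-- Maximal eigenvalue function of `fQ2`. -/
noncomputable def lmaxQ2 (θ : ℝ) : ℝ :=
  5 + Real.cos θ / 3 +
    Real.sqrt (129 + 126 * Real.cos θ + Real.cos θ ^ 2) / 3

/-- the eigenvalues of the Hermitian matrix `fQ2(θ)` are
`λ_{1,2}(θ) = 5 + cosθ/3 ∓ √(129 + 126cosθ + cos²θ)/3`; `λ_min` vanishes only at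
`θ = 0` (on `(−π, π]`) with a zero of order two; and the maximum over `θ` of the
maximum row sum of moduli of `f(θ)` equals `32/3`. -/
lemma fQ2_eq (θ : ℝ) : fQ2 θ =
    !![16/3, (-8 - 8 * Complex.exp (Complex.I * θ))/3;
       (-8 - 8 * Complex.exp (-(Complex.I * θ)))/3,
       (14 + Complex.exp (Complex.I * θ) + Complex.exp (-(Complex.I * θ)))/3] := by
  ext i j
  fin_cases i <;> fin_cases j <;>
    simp [fQ2, a0, a1, Matrix.add_apply, Matrix.smul_apply, Matrix.transpose_apply, Matrix.vecHead, Matrix.vecTail] <;> ring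


lemma gnonneg (θ : ℝ) : (0:ℝ) ≤ 129 + 126 * Real.cos θ + Real.cos θ ^ 2 := by
  nlinarith [Real.neg_one_le_cos θ, Real.cos_le_one θ, sq_nonneg (Real.cos θ)]

lemma spec (θ : ℝ) : spectrum ℂ (fQ2 θ) = {(lminQ2 θ : ℂ), (lmaxQ2 θ : ℂ)} := by
  ext μ
  have hmem : μ ∈ spectrum ℂ (fQ2 θ) ↔ (μ • (1 : Matrix (Fin 2) (Fin 2) ℂ) - fQ2 θ).det = 0 := by
    rw [spectrum.mem_iff, Matrix.isUnit_iff_isUnit_det, isUnit_iff_ne_zero, not_ne_iff,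
      Algebra.algebraMap_eq_smul_one]
  have hdet : (μ • (1 : Matrix (Fin 2) (Fin 2) ℂ) - fQ2 θ).det
      = (μ - (lminQ2 θ : ℂ)) * (μ - (lmaxQ2 θ : ℂ)) := by
    have hz : Complex.exp (Complex.I * θ) + Complex.exp (-(Complex.I * θ))
        = 2 * (Real.cos θ : ℂ) := by
      rw [Complex.ofReal_cos, Complex.cos]; ring_nf
    have hzw : Complex.exp (Complex.I * θ) * Complex.exp (-(Complex.I * θ)) = 1 := by
      rw [← Complex.exp_add]; simp
    have hs : ((Real.sqrt (129 + 126 * Real.cos θ + Real.cos θ ^ 2) : ℝ) : ℂ) ^ 2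
        = 129 + 126 * (Real.cos θ : ℂ) + (Real.cos θ : ℂ) ^ 2 := by
      rw [← Complex.ofReal_pow, Real.sq_sqrt (gnonneg θ)]; push_cast; ring
    rw [Matrix.det_fin_two]
    set c := Real.cos θ with hc
    simp only [Matrix.sub_apply, Matrix.smul_apply, Matrix.one_apply, fQ2_eq,
      Matrix.cons_val', Matrix.cons_val_zero, Matrix.cons_val_one, Matrix.head_cons,
      Matrix.empty_val', Matrix.cons_val_fin_one, Matrix.head_fin_const, lminQ2, lmaxQ2]
    rw [← hc]
    set r := Real.sqrt (129 + 126 * c + c ^ 2) with hr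
    norm_num
    linear_combination (-μ/3 - (48:ℂ)/9) * hz - (64/9 : ℂ) * hzw + (1/9 : ℂ) * hs
  rw [hmem, hdet, mul_eq_zero, Set.mem_insert_iff, Set.mem_singleton_iff, sub_eq_zero, sub_eq_zero]

lemma sqrt256 : Real.sqrt 256 = 16 := by
  rw [show (256:ℝ) = 16^2 by norm_num, Real.sqrt_sq (by norm_num)]

lemma lmin0 : lminQ2 0 = 0 := by
  simp [lminQ2, Real.cos_zero]
  rw [show (129 + 126 + 1 : ℝ) = 256 by norm_num, sqrt256]
  norm_num

lemma lmin_zero_only (θ : ℝ) (h1 : θ ∈ Set.Ioc (-Real.pi) Real.pi) (h : lminQ2 θ = 0) :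
    θ = 0 := by
  have hc1 : Real.cos θ = 1 := by
    have hsq : Real.sqrt (129 + 126 * Real.cos θ + Real.cos θ ^ 2) = 15 + Real.cos θ := by
      unfold lminQ2 at h; linarith
    have := Real.sq_sqrt (gnonneg θ)
    rw [hsq] at this
    nlinarith
  have hπ := Real.pi_pos
  refine Real.cos_eq_one_iff_of_lt_of_lt ?_ ?_ |>.1 hc1
  · linarith [h1.1]
  · rcases eq_or_lt_of_le h1.2 with rfl | hlt
    · exfalso; rw [Real.cos_pi] at hc1; norm_num at hc1
    · linarith

/-- the function g -/
lemma hasDerivAt_g (θ : ℝ) :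
    HasDerivAt (fun t => 129 + 126 * Real.cos t + Real.cos t ^ 2)
      (126 * (-Real.sin θ) + 2 * Real.cos θ * (-Real.sin θ)) θ := by
  have h1 : HasDerivAt Real.cos (-Real.sin θ) θ := Real.hasDerivAt_cos θ
  have := ((h1.const_mul (126:ℝ)).const_add (129:ℝ)).add (h1.pow 2)
  refine this.congr_deriv ?_
  norm_num

lemma gpos (θ : ℝ) : (0:ℝ) < 129 + 126 * Real.cos θ + Real.cos θ ^ 2 := by
  nlinarith [Real.neg_one_le_cos θ, Real.cos_le_one θ, sq_nonneg (Real.cos θ)]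

lemma sqrt_g_pos (θ : ℝ) : 0 < Real.sqrt (129 + 126 * Real.cos θ + Real.cos θ ^ 2) :=
  Real.sqrt_pos.2 (gpos θ)

noncomputable def D (θ : ℝ) : ℝ :=
  -Real.sin θ / 3 - (126 * (-Real.sin θ) + 2 * Real.cos θ * (-Real.sin θ)) /
    (2 * Real.sqrt (129 + 126 * Real.cos θ + Real.cos θ ^ 2)) / 3

lemma hasDerivAt_lmin (θ : ℝ) : HasDerivAt lminQ2 (D θ) θ := by
  have h1 : HasDerivAt Real.cos (-Real.sin θ) θ := Real.hasDerivAt_cos θ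
  have hsq := (hasDerivAt_g θ).sqrt (ne_of_gt (gpos θ))
  have := ((h1.div_const 3).const_add (5:ℝ)).sub (hsq.div_const 3)
  exact this

lemma deriv_lmin_eq : deriv lminQ2 = D := funext fun θ => (hasDerivAt_lmin θ).deriv

lemma deriv_lmin0 : deriv lminQ2 0 = 0 := by
  rw [deriv_lmin_eq]; simp [D]

lemma hasDerivAt_D0 : HasDerivAt D 1 0 := by
  have hs : HasDerivAt Real.sin (Real.cos 0) 0 := Real.hasDerivAt_sin 0
  have hc : HasDerivAt Real.cos (-Real.sin 0) 0 := Real.hasDerivAt_cos 0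
  -- numerator N t = 126 * (-sin t) + 2 * cos t * (-sin t)
  have hN : HasDerivAt (fun t => 126 * (-Real.sin t) + 2 * Real.cos t * (-Real.sin t))
      (-128 : ℝ) 0 := by
    have := ((hs.neg.const_mul (126:ℝ))).add
      (((hc.const_mul (2:ℝ)).mul hs.neg))
    refine this.congr_deriv ?_
    simp
    norm_num
  -- denominator M t = 2 * sqrt (g t)
  have hM : HasDerivAt (fun t => 2 * Real.sqrt (129 + 126 * Real.cos t + Real.cos t ^ 2))
      (0 : ℝ) 0 := by
    have hsq := (hasDerivAt_g 0).sqrt (ne_of_gt (gpos 0))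
    have := hsq.const_mul (2:ℝ)
    refine this.congr_deriv ?_
    simp
  have hM0 : (2 * Real.sqrt (129 + 126 * Real.cos 0 + Real.cos 0 ^ 2)) ≠ 0 := by
    have := sqrt_g_pos 0; positivity
  have hdiv := hN.div hM hM0
  have hfull := ((hs.neg.div_const 3)).sub ((hdiv.div_const (3:ℝ)))
  have : HasDerivAt D ((-Real.cos 0) / 3 -
      ((-128) * (2 * Real.sqrt (129 + 126 * Real.cos 0 + Real.cos 0 ^ 2)) -
        (126 * (-Real.sin 0) + 2 * Real.cos 0 * (-Real.sin 0)) * 0) /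
        (2 * Real.sqrt (129 + 126 * Real.cos 0 + Real.cos 0 ^ 2)) ^ 2 / 3) 0 := by
    exact hfull
  convert this using 1
  rw [show (129 + 126 * Real.cos 0 + Real.cos 0 ^ 2 : ℝ) = 256 by simp; norm_num, sqrt256]
  simp
  norm_num

lemma second_deriv : iteratedDeriv 2 lminQ2 0 = 1 := by
  rw [iteratedDeriv_succ, iteratedDeriv_one, deriv_lmin_eq]
  exact hasDerivAt_D0.deriv

lemma abs_exp_I (θ : ℝ) : ‖Complex.exp (Complex.I * θ)‖ = 1 := by
  rw [mul_comm]; exact Complex.norm_exp_ofReal_mul_I θ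

lemma abs_exp_negI (θ : ℝ) : ‖Complex.exp (-(Complex.I * θ))‖ = 1 := by
  rw [show -(Complex.I * (θ:ℂ)) = Complex.I * ((-θ : ℝ) : ℂ) by push_cast; ring]
  exact abs_exp_I (-θ)

lemma row_bound (θ : ℝ) :
    max (‖fQ2 θ 0 0‖ + ‖fQ2 θ 0 1‖)
        (‖fQ2 θ 1 0‖ + ‖fQ2 θ 1 1‖) ≤ 32 / 3 := by
  have hz := abs_exp_I θ
  have hw := abs_exp_negI θ
  rw [fQ2_eq]
  simp only [Matrix.cons_val', Matrix.cons_val_zero, Matrix.cons_val_one, Matrix.head_cons,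
    Matrix.empty_val', Matrix.cons_val_fin_one, Matrix.head_fin_const, Matrix.of_apply]
  have e1 : ‖(16/3 : ℂ)‖ = 16/3 := by
    rw [show (16/3 : ℂ) = ((16/3 : ℝ) : ℂ) by push_cast; ring, Complex.norm_real, Real.norm_eq_abs]
    norm_num
  have e2 : ‖(-8 - 8 * Complex.exp (Complex.I * θ))/3‖ ≤ 16/3 := by
    rw [norm_div]
    have h3 : ‖(3 : ℂ)‖ = 3 := by
      rw [show (3 : ℂ) = ((3 : ℝ) : ℂ) by norm_num, Complex.norm_real, Real.norm_eq_abs]; norm_num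
    rw [h3]
    have := norm_sub_le (-8 : ℂ) (8 * Complex.exp (Complex.I * θ))
    have h8 : ‖(-8 : ℂ)‖ = 8 := by
      rw [show (-8 : ℂ) = ((-8 : ℝ) : ℂ) by norm_num, Complex.norm_real, Real.norm_eq_abs]; norm_num
    have h8z : ‖8 * Complex.exp (Complex.I * θ)‖ = 8 := by
      rw [norm_mul, hz, show (8 : ℂ) = ((8 : ℝ) : ℂ) by norm_num, Complex.norm_real, Real.norm_eq_abs]; norm_num
    rw [show (-8 - 8 * Complex.exp (Complex.I * θ)) = (-8) - 8 * Complex.exp (Complex.I * θ) by ring] at *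
    linarith
  have e3 : ‖(-8 - 8 * Complex.exp (-(Complex.I * θ)))/3‖ ≤ 16/3 := by
    rw [norm_div]
    have h3 : ‖(3 : ℂ)‖ = 3 := by
      rw [show (3 : ℂ) = ((3 : ℝ) : ℂ) by norm_num, Complex.norm_real, Real.norm_eq_abs]; norm_num
    rw [h3]
    have := norm_sub_le (-8 : ℂ) (8 * Complex.exp (-(Complex.I * θ)))
    have h8 : ‖(-8 : ℂ)‖ = 8 := by
      rw [show (-8 : ℂ) = ((-8 : ℝ) : ℂ) by norm_num, Complex.norm_real, Real.norm_eq_abs]; norm_num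
    have h8z : ‖8 * Complex.exp (-(Complex.I * θ))‖ = 8 := by
      rw [norm_mul, hw, show (8 : ℂ) = ((8 : ℝ) : ℂ) by norm_num, Complex.norm_real, Real.norm_eq_abs]; norm_num
    linarith
  have e4 : ‖(14 + Complex.exp (Complex.I * θ) + Complex.exp (-(Complex.I * θ)))/3‖ ≤ 16/3 := by
    rw [norm_div]
    have h3 : ‖(3 : ℂ)‖ = 3 := by
      rw [show (3 : ℂ) = ((3 : ℝ) : ℂ) by norm_num, Complex.norm_real, Real.norm_eq_abs]; norm_num
    rw [h3]
    have t1 := norm_add_le ((14 : ℂ) + Complex.exp (Complex.I * θ)) (Complex.exp (-(Complex.I * θ)))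
    have t2 := norm_add_le (14 : ℂ) (Complex.exp (Complex.I * θ))
    have h14 : ‖(14 : ℂ)‖ = 14 := by
      rw [show (14 : ℂ) = ((14 : ℝ) : ℂ) by norm_num, Complex.norm_real, Real.norm_eq_abs]; norm_num
    rw [hz] at t2
    rw [hw] at t1
    rw [h14] at t2
    linarith
  apply max_le <;> linarith

lemma row_eq :
    max (‖fQ2 0 0 0‖ + ‖fQ2 0 0 1‖)
        (‖fQ2 0 1 0‖ + ‖fQ2 0 1 1‖) = 32 / 3 := by
  have hexp : Complex.exp (Complex.I * ((0:ℝ):ℂ)) = 1 := by norm_num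
  have hexp' : Complex.exp (-(Complex.I * ((0:ℝ):ℂ))) = 1 := by norm_num
  rw [fQ2_eq]
  simp only [Matrix.cons_val', Matrix.cons_val_zero, Matrix.cons_val_one, Matrix.head_cons,
    Matrix.empty_val', Matrix.cons_val_fin_one, Matrix.head_fin_const, Matrix.of_apply,
    hexp, hexp']
  have e1 : ‖(16/3 : ℂ)‖ = 16/3 := by
    rw [show (16/3 : ℂ) = ((16/3 : ℝ) : ℂ) by push_cast; ring, Complex.norm_real, Real.norm_eq_abs]; norm_num
  have e2 : ‖(-8 - 8 * 1 : ℂ)/3‖ = 16/3 := by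
    rw [show ((-8 - 8 * 1 : ℂ)/3) = ((-16/3 : ℝ) : ℂ) by push_cast; ring, Complex.norm_real, Real.norm_eq_abs]
    norm_num
  have e3 : ‖(14 + 1 + 1 : ℂ)/3‖ = 16/3 := by
    rw [show ((14 + 1 + 1 : ℂ)/3) = ((16/3 : ℝ) : ℂ) by push_cast; ring, Complex.norm_real, Real.norm_eq_abs]
    norm_num
  rw [e1, e2, e3]
  norm_num

theorem stmt_18 :
    (∀ θ : ℝ, spectrum ℂ (fQ2 θ) = {(lminQ2 θ : ℂ), (lmaxQ2 θ : ℂ)}) ∧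
    lminQ2 0 = 0 ∧
    (∀ θ ∈ Set.Ioc (-Real.pi) Real.pi, lminQ2 θ = 0 → θ = 0) ∧
    deriv lminQ2 0 = 0 ∧ 0 < iteratedDeriv 2 lminQ2 0 ∧
    (∀ θ : ℝ,
      max (‖fQ2 θ 0 0‖ + ‖fQ2 θ 0 1‖)
          (‖fQ2 θ 1 0‖ + ‖fQ2 θ 1 1‖) ≤ 32 / 3) ∧
    max (‖fQ2 0 0 0‖ + ‖fQ2 0 0 1‖)
        (‖fQ2 0 1 0‖ + ‖fQ2 0 1 1‖) = 32 / 3 :=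
  ⟨spec, lmin0, lmin_zero_only, deriv_lmin0, by rw [second_deriv]; norm_num, row_bound, row_eq⟩
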